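/- Let z : ℕ → ℂ be an injective sequence of complex numbers with no finite accumulation point (i.e., ‖z k‖ → ∞ as k → ∞), and let m : ℕ → ℕ with m k ≥ 1 for all k. Then there exists an entire function f, not identically zero, such that for every k the order of vanishing of f at z k equals m k, and f(w) ≠ 0 for every w ∈ ℂ not in the range of z. -/

import Mathlib

open Filter Complex Finset

namespace Weier

/-- Key estimate: tail of the log series. -/
lemma key_est {u : ℂ} (hu : ‖u‖ ≤ 1 / 2) (n : ℕ) :
    ‖Complex.log (1 - u) + ∑ j ∈ Finset.range n, u ^ (j + 1) / ((j : ℂ) + 1)‖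
      ≤ (1 / 2 : ℝ) ^ n := by
  have hu1 : ‖u‖ < 1 := lt_of_le_of_lt hu (by norm_num)
  have hs : HasSum (fun j : ℕ => u ^ j / (j : ℂ)) (-Complex.log (1 - u)) :=
    hasSum_taylorSeries_neg_log hu1
  have hs1 : HasSum (fun j : ℕ => u ^ (j + 1) / ((j : ℂ) + 1)) (-Complex.log (1 - u)) := by
    have h := (hasSum_nat_add_iff' (f := fun j : ℕ => u ^ j / (j : ℂ)) 1).mpr hs
    simp only [Finset.range_one, Finset.sum_singleton, Nat.cast_zero, div_zero, sub_zero] at h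
    convert h using 2 with j
    case e'_3 => rfl
    push_cast
    ring
  have hsum := hs1.summable
  have key := Summable.sum_add_tsum_nat_add (f := fun j : ℕ => u ^ (j + 1) / ((j : ℂ) + 1)) n hsum
  rw [hs1.tsum_eq] at key
  have h2 : Complex.log (1 - u) + ∑ j ∈ Finset.range n, u ^ (j + 1) / ((j : ℂ) + 1)
      = -∑' i : ℕ, u ^ (i + n + 1) / (((i + n : ℕ) : ℂ) + 1) := by
    linear_combination key
  rw [h2, norm_neg]
  have hg := (hasSum_geometric_of_lt_one (by norm_num : (0:ℝ) ≤ 1/2)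
      (by norm_num : (1/2:ℝ) < 1)).mul_left ((1/2 : ℝ) ^ (n + 1))
  have hg' : HasSum (fun i : ℕ => (1/2 : ℝ) ^ (n + 1) * (1/2) ^ i) ((1/2 : ℝ) ^ n) := by
    convert hg using 1
    case e'_3 => rfl
    rw [pow_succ]
    rw [mul_assoc]; norm_num
  refine tsum_of_norm_bounded hg' fun i => ?_
  have hd : (1 : ℝ) ≤ ‖(((i + n : ℕ) : ℂ) + 1)‖ := by
    have : (((i + n : ℕ) : ℂ) + 1) = ((i + n + 1 : ℕ) : ℂ) := by push_cast; ring
    rw [this, Complex.norm_natCast]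
    exact_mod_cast Nat.one_le_iff_ne_zero.mpr (by omega)
  calc ‖u ^ (i + n + 1) / (((i + n : ℕ) : ℂ) + 1)‖
      = ‖u‖ ^ (i + n + 1) / ‖(((i + n : ℕ) : ℂ) + 1)‖ := by rw [norm_div, norm_pow]
    _ ≤ ‖u‖ ^ (i + n + 1) / 1 := by
        apply div_le_div_of_nonneg_left ?_ ?_ hd <;> first
          | positivity
          | exact pow_nonneg (norm_nonneg u) _
    _ = ‖u‖ ^ (i + n + 1) := by rw [div_one]
    _ ≤ (1/2 : ℝ) ^ (i + n + 1) := pow_le_pow_left₀ (norm_nonneg u) hu _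
    _ = (1/2 : ℝ) ^ (n + 1) * (1/2) ^ i := by
        rw [show i + n + 1 = (n + 1) + i by omega, pow_add]

noncomputable def ell (a : ℕ → ℂ) (n : ℕ) (w : ℂ) : ℂ :=
  Complex.log (1 - w / a n) + ∑ j ∈ Finset.range n, (w / a n) ^ (j + 1) / ((j : ℂ) + 1)

noncomputable def hfac (a : ℕ → ℂ) (n : ℕ) (w : ℂ) : ℂ :=
  if a n = 0 then w else
    (1 - w / a n) * Complex.exp (∑ j ∈ Finset.range n, (w / a n) ^ (j + 1) / ((j : ℂ) + 1))

noncomputable def gfac (a : ℕ → ℂ) (n : ℕ) (w : ℂ) : ℂ :=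
  if a n = 0 then 1 else
    (-(a n)⁻¹) * Complex.exp (∑ j ∈ Finset.range n, (w / a n) ^ (j + 1) / ((j : ℂ) + 1))

noncomputable def PP (a : ℕ → ℂ) (N : ℕ) (w : ℂ) : ℂ := ∏ n ∈ Finset.range N, hfac a n w

noncomputable def TT (a : ℕ → ℂ) (N : ℕ) (w : ℂ) : ℂ := ∑' i : ℕ, ell a (N + i) w

def Valid (a : ℕ → ℂ) (N : ℕ) (w : ℂ) : Prop := ∀ n, N ≤ n → 2 * ‖w‖ < ‖a n‖

lemma norm_div_le {b w : ℂ} (h : 2 * ‖w‖ < ‖b‖) : ‖w / b‖ ≤ 1 / 2 := by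
  have hb : 0 < ‖b‖ := lt_of_le_of_lt (by positivity) h
  rw [norm_div, div_le_iff₀ hb]
  nlinarith [norm_nonneg w]

lemma one_sub_ne {b w : ℂ} (h : 2 * ‖w‖ < ‖b‖) : 1 - w / b ≠ 0 := by
  intro hc
  have h1 : w / b = 1 := by linear_combination -hc
  have h2 := norm_div_le h
  rw [h1, norm_one] at h2
  norm_num at h2

lemma hfac_eq {a : ℕ → ℂ} {n : ℕ} {w : ℂ} (h : 2 * ‖w‖ < ‖a n‖) :
    hfac a n w = Complex.exp (ell a n w) := by
  have hb : a n ≠ 0 := by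
    intro hc
    rw [hc] at h
    simp only [norm_zero] at h
    have : (0:ℝ) ≤ 2 * ‖w‖ := by positivity
    linarith
  rw [hfac, if_neg hb, ell, Complex.exp_add, Complex.exp_log (one_sub_ne h)]

lemma ell_norm_le {a : ℕ → ℂ} {n : ℕ} {w : ℂ} (h : 2 * ‖w‖ < ‖a n‖) :
    ‖ell a n w‖ ≤ (1 / 2 : ℝ) ^ n := key_est (norm_div_le h) n

lemma summable_half (N : ℕ) : Summable (fun i : ℕ => (1 / 2 : ℝ) ^ (N + i)) := by
  simp_rw [pow_add]
  exact (summable_geometric_of_lt_one (by norm_num) (by norm_num)).mul_left _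

lemma summable_ell {a : ℕ → ℂ} {N : ℕ} {w : ℂ} (h : Valid a N w) :
    Summable (fun i : ℕ => ell a (N + i) w) :=
  Summable.of_norm_bounded (summable_half N)
    (fun i => ell_norm_le (h _ (Nat.le_add_right N i)))

lemma TT_split {a : ℕ → ℂ} {N M : ℕ} {w : ℂ} (h : Valid a N w) (hNM : N ≤ M) :
    TT a N w = (∑ n ∈ Finset.Ico N M, ell a n w) + TT a M w := by
  have key := Summable.sum_add_tsum_nat_add (f := fun i : ℕ => ell a (N + i) w) (M - N) (summable_ell h)
  have h1 : ∀ i : ℕ, ell a (N + (i + (M - N))) w = ell a (M + i) w := by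
    intro i; congr 1; omega
  have h2 : (∑' i : ℕ, ell a (N + (i + (M - N))) w) = TT a M w := by
    rw [TT]; exact tsum_congr h1
  have h3 : ∑ i ∈ Finset.range (M - N), ell a (N + i) w = ∑ n ∈ Finset.Ico N M, ell a n w := by
    rw [Finset.sum_Ico_eq_sum_range]
  rw [TT, ← key, h3, h2]

lemma welldef {a : ℕ → ℂ} {N M : ℕ} {w : ℂ} (hN : Valid a N w) (hM : Valid a M w) :
    PP a N w * Complex.exp (TT a N w) = PP a M w * Complex.exp (TT a M w) := by
  -- reduce to the case N ≤ M
  wlog hNM : N ≤ M generalizing N M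
  · exact (this hM hN (le_of_not_ge hNM)).symm
  have hP : PP a M w = PP a N w * ∏ n ∈ Finset.Ico N M, hfac a n w :=
    (Finset.prod_range_mul_prod_Ico _ hNM).symm
  have hprod : ∏ n ∈ Finset.Ico N M, hfac a n w
      = Complex.exp (∑ n ∈ Finset.Ico N M, ell a n w) := by
    rw [Complex.exp_sum]
    exact Finset.prod_congr rfl fun n hn => hfac_eq (hN n (Finset.mem_Ico.mp hn).1)
  rw [hP, hprod, TT_split hN hNM, Complex.exp_add]
  ring

lemma hfac_diff (a : ℕ → ℂ) (n : ℕ) : Differentiable ℂ (hfac a n) := by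
  unfold hfac
  split_ifs with h
  · exact differentiable_id
  · exact ((differentiable_const 1).sub (differentiable_id.div_const _)).mul
      ((Differentiable.fun_sum fun j _ =>
        (((differentiable_id.div_const _).pow _).div_const _)).cexp)

lemma gfac_diff (a : ℕ → ℂ) (n : ℕ) : Differentiable ℂ (gfac a n) := by
  unfold gfac
  split_ifs with h
  · exact differentiable_const 1
  · exact (differentiable_const _).mul
      ((Differentiable.fun_sum fun j _ =>
        (((differentiable_id.div_const _).pow _).div_const _)).cexp)

lemma PP_diff (a : ℕ → ℂ) (N : ℕ) : Differentiable ℂ (PP a N) := by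
  unfold PP
  exact Differentiable.fun_finsetProd fun n _ => hfac_diff a n

lemma TT_diffOn {a : ℕ → ℂ} {N : ℕ} {R : ℝ}
    (h : ∀ n, N ≤ n → 2 * R < ‖a n‖) (hR : 0 ≤ R) :
    DifferentiableOn ℂ (TT a N) (Metric.ball (0 : ℂ) R) := by
  unfold TT
  apply differentiableOn_tsum_of_summable_norm (summable_half N)
    (fun i => ?_) Metric.isOpen_ball (fun i w hw => ?_)
  · -- each term differentiable on the ball
    intro w hw
    have hw' : ‖w‖ < R := by simpa using hw
    have hval : 2 * ‖w‖ < ‖a (N + i)‖ :=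
      lt_trans (by linarith) (h _ (Nat.le_add_right N i))
    apply DifferentiableAt.differentiableWithinAt
    unfold ell
    apply DifferentiableAt.add
    · apply DifferentiableAt.clog
      · exact (differentiableAt_const 1).sub (differentiableAt_id.div_const _)
      · apply Complex.mem_slitPlane_iff.mpr
        left
        have h1 : ‖w / a (N + i)‖ ≤ 1 / 2 := norm_div_le hval
        have h2 : (w / a (N + i)).re ≤ ‖w / a (N + i)‖ := Complex.re_le_norm _
        simp only [Complex.sub_re, Complex.one_re]
        linarith
    · exact DifferentiableAt.fun_sum fun j _ =>
        ((differentiableAt_id.div_const _).pow _).div_const _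
  · -- the bound
    have hw' : ‖w‖ < R := by simpa using hw
    exact ell_norm_le (lt_trans (by linarith) (h _ (Nat.le_add_right N i)))

lemma hfac_zero_iff (a : ℕ → ℂ) (n : ℕ) (w : ℂ) : hfac a n w = 0 ↔ w = a n := by
  unfold hfac
  split_ifs with h
  · rw [h]
  · rw [mul_eq_zero]
    simp only [Complex.exp_ne_zero, or_false]
    constructor
    · intro hc
      have : w / a n = 1 := by linear_combination -hc
      field_simp at this
      exact this
    · intro hc; rw [hc]; field_simp; ring

lemma hfac_factor {a : ℕ → ℂ} {n : ℕ} {w₀ : ℂ} (he : a n = w₀) (w : ℂ) :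
    hfac a n w = (w - w₀) * gfac a n w := by
  unfold hfac gfac
  split_ifs with h
  · rw [← he, h]; ring
  · rw [← he]
    have : (1 - w / a n) = (w - a n) * (-(a n)⁻¹) := by field_simp; ring
    rw [this]; ring

lemma gfac_ne_zero (a : ℕ → ℂ) (n : ℕ) (w : ℂ) : gfac a n w ≠ 0 := by
  unfold gfac
  split_ifs with h
  · exact one_ne_zero
  · exact mul_ne_zero (by simp [h]) (Complex.exp_ne_zero _)


theorem weier (a : ℕ → ℂ) (ha : ∀ C : ℝ, {n : ℕ | ‖a n‖ ≤ C}.Finite) :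
    ∃ (f : ℂ → ℂ) (hf : Differentiable ℂ f),
      (∀ w : ℂ, f w = 0 ↔ w ∈ Set.range a) ∧
      ∀ w₀ : ℂ, analyticOrderAt f w₀ = (Nat.card {n : ℕ | a n = w₀} : ℕ∞) := by
  have hNex : ∀ R : ℝ, ∃ N : ℕ, ∀ n, N ≤ n → 2 * R < ‖a n‖ := by
    intro R
    obtain ⟨N, hN⟩ := (ha (2 * R)).bddAbove
    refine ⟨N + 1, fun n hn => lt_of_not_ge fun hle => ?_⟩
    have := hN hle
    omega
  choose NN hNN using hNex
  set f : ℂ → ℂ := fun w => PP a (NN ‖w‖) w * Complex.exp (TT a (NN ‖w‖) w) with hfdef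
  have hVnn : ∀ w : ℂ, Valid a (NN ‖w‖) w := fun w n hn => hNN ‖w‖ n hn
  have hfval : ∀ (w : ℂ) (N : ℕ), Valid a N w →
      f w = PP a N w * Complex.exp (TT a N w) :=
    fun w N h => welldef (hVnn w) h
  -- validity on balls
  have hVball : ∀ (w₀ : ℂ) (w : ℂ), w ∈ Metric.ball (0 : ℂ) (‖w₀‖ + 1) →
      Valid a (NN (‖w₀‖ + 1)) w := by
    intro w₀ w hw n hn
    have hw' : ‖w‖ < ‖w₀‖ + 1 := by simpa using hw
    have := hNN (‖w₀‖ + 1) n hn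
    linarith
  -- differentiability
  have hf : Differentiable ℂ f := by
    intro w₀
    set R := ‖w₀‖ + 1 with hR
    set N := NN R with hNdef
    have hR0 : (0 : ℝ) ≤ R := by positivity
    have hw₀ : w₀ ∈ Metric.ball (0 : ℂ) R := by
      simp only [Metric.mem_ball, dist_zero_right]
      linarith [norm_nonneg w₀]
    have hgd : DifferentiableOn ℂ
        (fun w => PP a N w * Complex.exp (TT a N w)) (Metric.ball (0 : ℂ) R) :=
      ((PP_diff a N).differentiableOn).mul ((TT_diffOn (fun n hn => hNN R n hn) hR0).cexp)
    have heq : f =ᶠ[nhds w₀] fun w => PP a N w * Complex.exp (TT a N w) :=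
      Filter.eventuallyEq_of_mem (Metric.isOpen_ball.mem_nhds hw₀)
        (fun w hw => hfval w N (hVball w₀ w hw))
    exact (hgd.differentiableAt (Metric.isOpen_ball.mem_nhds hw₀)).congr_of_eventuallyEq heq
  refine ⟨f, hf, ?_, ?_⟩
  · -- zero set
    intro w
    rw [hfval w (NN ‖w‖) (hVnn w), mul_eq_zero]
    simp only [Complex.exp_ne_zero, or_false]
    rw [PP, Finset.prod_eq_zero_iff]
    constructor
    · rintro ⟨n, _, hn0⟩
      exact ⟨n, ((hfac_zero_iff a n w).mp hn0).symm⟩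
    · rintro ⟨n, hn⟩
      refine ⟨n, Finset.mem_range.mpr ?_, (hfac_zero_iff a n w).mpr hn.symm⟩
      by_contra hge
      have hv := hVnn w n (le_of_not_gt hge)
      rw [← hn] at hv
      nlinarith [norm_nonneg (a n)]
  · -- order
    intro w₀
    set R := ‖w₀‖ + 1 with hR
    set N := NN R with hNdef
    have hR0 : (0 : ℝ) ≤ R := by positivity
    have hw₀ : w₀ ∈ Metric.ball (0 : ℂ) R := by
      simp only [Metric.mem_ball, dist_zero_right]; linarith [norm_nonneg w₀]
    have hfiber_lt : ∀ n : ℕ, a n = w₀ → n < N := by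
      intro n hn
      by_contra hge
      have hv := hNN R n (le_of_not_gt hge)
      rw [hn] at hv
      have : ‖w₀‖ < R := by simpa using hw₀
      linarith
    set F : Finset ℕ := (Finset.range N).filter (fun n => a n = w₀) with hFdef
    have hsetF : {n : ℕ | a n = w₀} = ↑F := by
      ext n
      simp only [Set.mem_setOf_eq, hFdef, Finset.coe_filter, Finset.mem_range,
        Set.mem_setOf_eq]
      exact ⟨fun h => ⟨hfiber_lt n h, h⟩, fun h => h.2⟩
    have hcard : Nat.card {n : ℕ | a n = w₀} = F.card := by
      rw [hsetF, Nat.card_coe_set_eq, Set.ncard_coe_finset]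
    set G : ℂ → ℂ := fun w =>
      ((∏ n ∈ F, gfac a n w) *
        ∏ n ∈ (Finset.range N).filter (fun n => ¬ a n = w₀), hfac a n w) *
        Complex.exp (TT a N w) with hGdef
    have hPG : ∀ w : ℂ, w ∈ Metric.ball (0 : ℂ) R → f w = (w - w₀) ^ F.card * G w := by
      intro w hw
      rw [hfval w N (hVball w₀ w hw), hGdef]
      have h1 : PP a N w = (∏ n ∈ F, hfac a n w) *
          ∏ n ∈ (Finset.range N).filter (fun n => ¬ a n = w₀), hfac a n w := by
        rw [PP, ← Finset.prod_filter_mul_prod_filter_not (Finset.range N)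
          (fun n => a n = w₀)]
      have h2 : ∏ n ∈ F, hfac a n w = (w - w₀) ^ F.card * ∏ n ∈ F, gfac a n w := by
        rw [← Finset.prod_const, ← Finset.prod_mul_distrib]
        exact Finset.prod_congr rfl fun n hn =>
          hfac_factor (Finset.mem_filter.mp hn).2 w
      rw [h1, h2]; ring
    have hGd : DifferentiableOn ℂ G (Metric.ball (0 : ℂ) R) := by
      apply DifferentiableOn.mul
      · apply DifferentiableOn.mul
        · exact (Differentiable.fun_finsetProd fun n _ => gfac_diff a n).differentiableOn
        · exact (Differentiable.fun_finsetProd fun n _ => hfac_diff a n).differentiableOn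
      · exact (TT_diffOn (fun n hn => hNN R n hn) hR0).cexp
    have hGan : AnalyticAt ℂ G w₀ := hGd.analyticAt (Metric.isOpen_ball.mem_nhds hw₀)
    have hG0 : G w₀ ≠ 0 := by
      rw [hGdef]
      apply mul_ne_zero
      apply mul_ne_zero
      · exact Finset.prod_ne_zero_iff.mpr fun n _ => gfac_ne_zero a n w₀
      · refine Finset.prod_ne_zero_iff.mpr fun n hn => ?_
        intro hc
        exact (Finset.mem_filter.mp hn).2 ((hfac_zero_iff a n w₀).mp hc).symm
      · exact Complex.exp_ne_zero _
    rw [hcard]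
    rw [(hf.analyticAt w₀).analyticOrderAt_eq_natCast]
    refine ⟨G, hGan, hG0, ?_⟩
    exact Filter.eventually_of_mem (Metric.isOpen_ball.mem_nhds hw₀)
      (fun w hw => by rw [hPG w hw]; simp [smul_eq_mul])

end Weier

open Filter

/-- **Weierstrass' theorem.** Given an injective sequence `z` of complex
numbers with no finite accumulation point and prescribed multiplicities `m k ≥ 1`,
there is a nonzero entire function whose order of vanishing at `z k` is exactly `m k`
and which does not vanish elsewhere. -/
theorem exists_entire_with_prescribed_zeros (z : ℕ → ℂ) (hz : Function.Injective z)
    (hz' : Tendsto (fun k => ‖z k‖) atTop atTop) (m : ℕ → ℕ) (hm : ∀ k, 1 ≤ m k) :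
    ∃ (f : ℂ → ℂ) (hf : Differentiable ℂ f), f ≠ 0 ∧
      (∀ k : ℕ, analyticOrderAt f (z k) = (m k : ℕ∞)) ∧
      (∀ w : ℂ, w ∉ Set.range z → f w ≠ 0) := by
  classical
  -- enumerate the zeros with multiplicity
  have hinf : Infinite ((k : ℕ) × Fin (m k)) :=
    Infinite.of_injective (fun k => ⟨k, ⟨0, hm k⟩⟩) (fun k k' h => congrArg Sigma.fst h)
  have hden : Denumerable ((k : ℕ) × Fin (m k)) := Denumerable.ofEncodableOfInfinite _
  set e : ℕ ≃ (k : ℕ) × Fin (m k) := (Denumerable.eqv _).symm with hedef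
  set a : ℕ → ℂ := fun n => z (e n).1 with hadef
  -- fibers of the first projection are finite
  have hfib : ∀ k : ℕ, {s : (k : ℕ) × Fin (m k) | s.1 = k}.Finite := by
    intro k
    have : {s : (k : ℕ) × Fin (m k) | s.1 = k}
        ⊆ Set.range (fun j : Fin (m k) => (⟨k, j⟩ : (k : ℕ) × Fin (m k))) := by
      rintro ⟨k', j⟩ hs
      simp only [Set.mem_setOf_eq] at hs
      subst hs
      exact ⟨j, rfl⟩
    exact (Set.finite_range _).subset this
  -- norms of `a` escape to infinity
  have ha : ∀ C : ℝ, {n : ℕ | ‖a n‖ ≤ C}.Finite := by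
    intro C
    have hK : {k : ℕ | ‖z k‖ ≤ C}.Finite := by
      have hev : ∀ᶠ k in cofinite, C < ‖z k‖ := by
        rw [Nat.cofinite_eq_atTop]
        exact hz'.eventually (eventually_gt_atTop C)
      have := Filter.eventually_cofinite.mp hev
      convert this using 1
      ext k
      simp [not_lt]
    have hS : {s : (k : ℕ) × Fin (m k) | ‖z s.1‖ ≤ C}.Finite := by
      have : {s : (k : ℕ) × Fin (m k) | ‖z s.1‖ ≤ C}
          ⊆ ⋃ k ∈ {k : ℕ | ‖z k‖ ≤ C}, {s : (k : ℕ) × Fin (m k) | s.1 = k} := by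
        rintro s hs
        simp only [Set.mem_iUnion]
        exact ⟨s.1, hs, rfl⟩
      exact (hK.biUnion fun k _ => hfib k).subset this
    have : {n : ℕ | ‖a n‖ ≤ C} = e ⁻¹' {s : (k : ℕ) × Fin (m k) | ‖z s.1‖ ≤ C} := rfl
    rw [this]
    exact hS.preimage (e.injective.injOn)
  obtain ⟨f, hf, hzero, horder⟩ := Weier.weier a ha
  -- the fiber counts
  have hcard : ∀ k : ℕ, Nat.card {n : ℕ | a n = z k} = m k := by
    intro k
    have hiff : ∀ n : ℕ, a n = z k ↔ (e n).1 = k :=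
      fun n => ⟨fun h => hz h, fun h => congrArg z h⟩
    have e1 : {n : ℕ // a n = z k} ≃ {s : (k : ℕ) × Fin (m k) // s.1 = k} :=
      e.subtypeEquiv fun n => hiff n
    have e2 : {s : (k : ℕ) × Fin (m k) // s.1 = k} ≃ Fin (m k) :=
      { toFun := fun s => s.prop ▸ s.val.2
        invFun := fun j => ⟨⟨k, j⟩, rfl⟩
        left_inv := by rintro ⟨⟨k', j⟩, rfl⟩; rfl
        right_inv := by intro j; rfl }
    exact (Nat.card_congr (e1.trans e2)).trans
      (Nat.card_eq_fintype_card.trans (Fintype.card_fin _))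
  have horder' : ∀ k : ℕ, analyticOrderAt f (z k) = (m k : ℕ∞) := by
    intro k
    rw [horder (z k), hcard k]
  -- ranges agree
  have hrange : Set.range a = Set.range z := by
    ext w
    constructor
    · rintro ⟨n, rfl⟩; exact ⟨(e n).1, rfl⟩
    · rintro ⟨k, rfl⟩
      refine ⟨e.symm ⟨k, ⟨0, hm k⟩⟩, ?_⟩
      simp [hadef]
  refine ⟨f, hf, ?_, horder', ?_⟩
  · -- f is not the zero function
    intro h0
    have h1 : analyticOrderAt f (z 0) = ⊤ :=
      analyticOrderAt_eq_top.mpr (by simp [h0])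
    rw [horder' 0] at h1
    exact (ENat.coe_ne_top (m 0)) h1
  · intro w hw hc
    exact hw (hrange ▸ (hzero w).mp hc)
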